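/- Let H0 be a self-adjoint operator with H0 ≥ 1 and spectral projections Q^0_L = E([1,L]), let B be a symmetric operator with D(H0) ⊆ D(B) such that H = H0 + B is self-adjoint on D(H0), assume D = D^∞(H0) = D^∞(H), and define V_L^t := Q^0_L e^{iHt} Q^0_L. Then: (i) for every ψ ∈ D and every t, V_L^t ψ converges to ψ(t) := e^{iHt} ψ in the graph topology t_H (i.e. ‖H^n (V_L^t ψ − e^{iHt} ψ)‖ → 0 for every n) as L → ∞; (ii) V_L^t converges to e^{iHt} in the quasi-uniform topology τ_*^D; moreover, for every n ∈ ℕ∪{0}, the n-th time derivative (d^n/dt^n) V_L^t ψ converges in t_H to (d^n/dt^n) ψ(t). -/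

import Mathlib

open scoped ComplexInnerProductSpace

namespace Paper

/-- An unbounded linear operator in a Hilbert space `𝓗`, encoded by a distinguished
domain together with a globally defined linear extension of its action. -/
structure Op (𝓗 : Type*) [NormedAddCommGroup 𝓗] [InnerProductSpace ℂ 𝓗] where
  dom : Submodule ℂ 𝓗
  op : 𝓗 →ₗ[ℂ] 𝓗

variable {𝓗 : Type*} [NormedAddCommGroup 𝓗] [InnerProductSpace ℂ 𝓗]

namespace Op

/-- `T.pw k` is the `k`-th power `T^k` of `T`, as a function. -/
def pw (T : Op 𝓗) (k : ℕ) : 𝓗 → 𝓗 := (fun x => T.op x)^[k]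

/-- The domain `D(Tⁿ)` of the `n`-th power of `T`. -/
def domPow (T : Op 𝓗) : ℕ → Set 𝓗
  | 0 => Set.univ
  | n + 1 => {x | x ∈ T.dom ∧ T.op x ∈ T.domPow n}

/-- The set of C^∞-vectors `D^∞(T) = ⋂ₙ D(Tⁿ)`. -/
def Dinf (T : Op 𝓗) : Set 𝓗 := ⋂ n : ℕ, T.domPow n

/-- `T` is symmetric. -/
def Symmetric (T : Op 𝓗) : Prop :=
  ∀ x ∈ T.dom, ∀ y ∈ T.dom, ⟪T.op x, y⟫ = ⟪x, T.op y⟫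

/-- Self-adjointness: densely defined, symmetric, and every vector in the domain of the
adjoint already belongs to the domain (on which the adjoint acts as the operator). -/
def IsSelfAdjoint (T : Op 𝓗) : Prop :=
  Dense (T.dom : Set 𝓗) ∧ T.Symmetric ∧
    ∀ y z : 𝓗, (∀ x ∈ T.dom, ⟪T.op x, y⟫ = ⟪x, z⟫) → y ∈ T.dom ∧ T.op y = z

/-- `T ≥ 1`. -/
def GeOne (T : Op 𝓗) : Prop := ∀ x ∈ T.dom, ‖x‖ ^ 2 ≤ (⟪T.op x, x⟫).re

/-- The perturbed operator `T + B`, with domain `D(T)`. -/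
def pert (T B : Op 𝓗) : Op 𝓗 := ⟨T.dom, T.op + B.op⟩

/-- The graph topology `t_T` on a subset `D`, generated by the seminorms `φ ↦ ‖Tⁿφ‖`,
i.e. the initial topology for the maps `φ ↦ Tⁿφ`. -/
def graphTopOn (T : Op 𝓗) (D : Set 𝓗) : TopologicalSpace D :=
  ⨅ n : ℕ, TopologicalSpace.induced (fun φ : D => T.pw n ↑φ) inferInstance

end Op

/-- `D0` is a core for the `k`-th power of `T`. -/
def IsCorePow (T : Op 𝓗) (k : ℕ) (D0 : Set 𝓗) : Prop :=
  D0 ⊆ T.domPow k ∧ ∀ x ∈ T.domPow k, ∃ u : ℕ → 𝓗, (∀ n, u n ∈ D0) ∧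
    Filter.Tendsto u Filter.atTop (nhds x) ∧
    Filter.Tendsto (fun n => T.pw k (u n)) Filter.atTop (nhds (T.pw k x))

/-- Membership in the O*-algebra `L†(D)`: `A` maps `D` into `D`, `D ⊆ D(A*)` and
`A* D ⊆ D` (witnessed by `Adag`). -/
def MemLdag (D : Set 𝓗) (A : 𝓗 →ₗ[ℂ] 𝓗) : Prop :=
  (∀ x ∈ D, A x ∈ D) ∧
    ∃ Adag : 𝓗 →ₗ[ℂ] 𝓗, (∀ x ∈ D, Adag x ∈ D) ∧
      ∀ x ∈ D, ∀ y ∈ D, ⟪A x, y⟫ = ⟪x, Adag y⟫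

/-- The operator norm of (the bounded extension of) `A`, computed on the unit ball of `D`. -/
noncomputable def opNormOn (D : Set 𝓗) (A : 𝓗 → 𝓗) : ℝ :=
  ⨆ φ : {ψ : 𝓗 // ψ ∈ D ∧ ‖ψ‖ ≤ 1}, ‖A ↑φ‖

/-- The class `F` of positive, bounded, continuous functions on `[0,∞)` which decrease
faster than any inverse power of `x`. -/
def IsInF (f : ℝ → ℝ) : Prop :=
  Continuous f ∧ (∀ x : ℝ, 0 ≤ x → 0 < f x) ∧
    ∀ k : ℕ, ∃ M : ℝ, ∀ x : ℝ, 0 ≤ x → x ^ k * f x ≤ M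

/-- The bounded measurable functional calculus of a self-adjoint operator `T` whose
spectrum is contained in `[a, ∞)`. -/
structure FnCalc (T : Op 𝓗) (a : ℝ) where
  Φ : (ℝ → ℝ) → (𝓗 →L[ℂ] 𝓗)
  Φ_one : Φ (fun _ => 1) = 1
  Φ_add : ∀ f g : ℝ → ℝ, Measurable f → Measurable g →
    Φ (fun t => f t + g t) = Φ f + Φ g
  Φ_mul : ∀ f g : ℝ → ℝ, Measurable f → Measurable g →
    Φ (fun t => f t * g t) = (Φ f).comp (Φ g)
  Φ_symm : ∀ (f : ℝ → ℝ) (x y : 𝓗), ⟪Φ f x, y⟫ = ⟪x, Φ f y⟫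
  Φ_norm : ∀ (f : ℝ → ℝ) (M : ℝ), (∀ t : ℝ, a ≤ t → |f t| ≤ M) →
    ∀ x : 𝓗, ‖Φ f x‖ ≤ M * ‖x‖
  Φ_supp : ∀ f : ℝ → ℝ, Measurable f → (∀ t : ℝ, a ≤ t → f t = 0) → Φ f = 0
  Φ_pos : ∀ f : ℝ → ℝ, Measurable f → (∀ t : ℝ, a ≤ t → 0 ≤ f t) →
    ∀ x : 𝓗, 0 ≤ (⟪Φ f x, x⟫).re
  Φ_dom : ∀ f : ℝ → ℝ, Measurable f → (∃ M : ℝ, ∀ t : ℝ, a ≤ t → |t * f t| ≤ M) →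
    ∀ x : 𝓗, Φ f x ∈ T.dom ∧ T.op (Φ f x) = Φ (fun t => t * f t) x
  Q_tendsto : ∀ x : 𝓗, Filter.Tendsto
    (fun L : ℝ => Φ (Set.indicator (Set.Icc a L) fun _ => (1 : ℝ)) x)
    Filter.atTop (nhds x)

/-- The spectral projection `Q_L = E([a, L])` of `T`. -/
noncomputable def FnCalc.Q {T : Op 𝓗} {a : ℝ} (c : FnCalc T a) (L : ℝ) : 𝓗 →L[ℂ] 𝓗 :=
  c.Φ (Set.indicator (Set.Icc a L) fun _ => (1 : ℝ))

/-- The seminorm `A ↦ max{‖Tᵏ A f(T)‖, ‖f(T) A Tᵏ‖}` of the quasi-uniform topology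
`τ_*` on `L†(D)`. -/
noncomputable def qseminorm {T : Op 𝓗} {a : ℝ} (c : FnCalc T a) (D : Set 𝓗)
    (f : ℝ → ℝ) (k : ℕ) (A : 𝓗 →ₗ[ℂ] 𝓗) : ℝ :=
  max (opNormOn D fun φ => T.pw k (A (c.Φ f φ)))
      (opNormOn D fun φ => c.Φ f (A (T.pw k φ)))

/-- `i[A,T] = i(A T - T A)`, as a function. -/
noncomputable def commI (A T : 𝓗 → 𝓗) : 𝓗 → 𝓗 :=
  fun φ => Complex.I • (A (T φ) - T (A φ))

/-- Iterated commutators: `itComm A B j = [A, B]_j`, with `[A,B]_0 = B` and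
`[A,B]_{j+1} = [A, [A,B]_j]`. -/
def itComm (A B : 𝓗 → 𝓗) : ℕ → (𝓗 → 𝓗)
  | 0 => B
  | j + 1 => fun φ => A (itComm A B j φ) - itComm A B j (A φ)

variable {𝓗 : Type*} [NormedAddCommGroup 𝓗] [InnerProductSpace ℂ 𝓗] [CompleteSpace 𝓗]

/-! ### Auxiliary lemmas -/

section Aux
set_option linter.unusedSectionVars false
open Filter

variable {T S : Op 𝓗}

namespace Op

lemma pw_zero_apply (T : Op 𝓗) (x : 𝓗) : T.pw 0 x = x := rfl

lemma pw_succ_apply (T : Op 𝓗) (n : ℕ) (x : 𝓗) : T.pw (n + 1) x = T.pw n (T.op x) :=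
  Function.iterate_succ_apply _ _ _

lemma pw_succ_apply' (T : Op 𝓗) (n : ℕ) (x : 𝓗) : T.pw (n + 1) x = T.op (T.pw n x) :=
  Function.iterate_succ_apply' _ _ _

lemma pw_add_apply (T : Op 𝓗) (m n : ℕ) (x : 𝓗) : T.pw (m + n) x = T.pw m (T.pw n x) :=
  Function.iterate_add_apply _ _ _ _

lemma pw_map_add (T : Op 𝓗) (k : ℕ) (x y : 𝓗) : T.pw k (x + y) = T.pw k x + T.pw k y := by
  induction k with
  | zero => rfl
  | succ k ih => simp only [T.pw_succ_apply', ih, map_add]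

lemma pw_map_smul (T : Op 𝓗) (k : ℕ) (c : ℂ) (x : 𝓗) : T.pw k (c • x) = c • T.pw k x := by
  induction k with
  | zero => rfl
  | succ k ih => simp only [T.pw_succ_apply', ih, map_smul]

lemma pw_map_sub (T : Op 𝓗) (k : ℕ) (x y : 𝓗) : T.pw k (x - y) = T.pw k x - T.pw k y := by
  induction k with
  | zero => rfl
  | succ k ih => simp only [T.pw_succ_apply', ih, map_sub]

lemma mem_domPow_succ {x : 𝓗} {n : ℕ} :
    x ∈ T.domPow (n + 1) ↔ x ∈ T.dom ∧ T.op x ∈ T.domPow n := Iff.rfl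

lemma mem_Dinf_iff {x : 𝓗} : x ∈ T.Dinf ↔ ∀ n, x ∈ T.domPow n := Set.mem_iInter

lemma domPow_add_mem (n : ℕ) : ∀ {x y : 𝓗}, x ∈ T.domPow n → y ∈ T.domPow n →
    x + y ∈ T.domPow n := by
  induction n with
  | zero => intro x y _ _; trivial
  | succ n ih =>
      intro x y hx hy
      exact ⟨T.dom.add_mem hx.1 hy.1, by rw [map_add]; exact ih hx.2 hy.2⟩

lemma domPow_smul_mem (n : ℕ) (c : ℂ) : ∀ {x : 𝓗}, x ∈ T.domPow n → c • x ∈ T.domPow n := by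
  induction n with
  | zero => intro x _; trivial
  | succ n ih =>
      intro x hx
      exact ⟨T.dom.smul_mem c hx.1, by rw [map_smul]; exact ih hx.2⟩

lemma domPow_neg_mem (n : ℕ) {x : 𝓗} (hx : x ∈ T.domPow n) : -x ∈ T.domPow n := by
  have := T.domPow_smul_mem n (-1 : ℂ) hx; simpa using this

lemma Dinf_add_mem {x y : 𝓗} (hx : x ∈ T.Dinf) (hy : y ∈ T.Dinf) : x + y ∈ T.Dinf :=
  mem_Dinf_iff.2 fun n => T.domPow_add_mem n (mem_Dinf_iff.1 hx n) (mem_Dinf_iff.1 hy n)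

lemma Dinf_smul_mem (c : ℂ) {x : 𝓗} (hx : x ∈ T.Dinf) : c • x ∈ T.Dinf :=
  mem_Dinf_iff.2 fun n => T.domPow_smul_mem n c (mem_Dinf_iff.1 hx n)

lemma Dinf_sub_mem {x y : 𝓗} (hx : x ∈ T.Dinf) (hy : y ∈ T.Dinf) : x - y ∈ T.Dinf := by
  rw [sub_eq_add_neg]
  exact T.Dinf_add_mem hx (mem_Dinf_iff.2 fun n => T.domPow_neg_mem n (mem_Dinf_iff.1 hy n))

lemma Dinf_zero_mem : (0 : 𝓗) ∈ T.Dinf := by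
  refine mem_Dinf_iff.2 fun n => ?_
  induction n with
  | zero => trivial
  | succ n ih => exact ⟨T.dom.zero_mem, by rw [map_zero]; exact ih⟩

lemma Dinf_mem_dom {x : 𝓗} (hx : x ∈ T.Dinf) : x ∈ T.dom := (mem_Dinf_iff.1 hx 1).1

lemma Dinf_op_mem {x : 𝓗} (hx : x ∈ T.Dinf) : T.op x ∈ T.Dinf :=
  mem_Dinf_iff.2 fun n => (mem_Dinf_iff.1 hx (n + 1)).2

lemma Dinf_pw_mem (k : ℕ) {x : 𝓗} (hx : x ∈ T.Dinf) : T.pw k x ∈ T.Dinf := by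
  induction k with
  | zero => exact hx
  | succ k ih => rw [T.pw_succ_apply']; exact T.Dinf_op_mem ih

lemma domPow_of_succ {n : ℕ} {x : 𝓗} (hx : x ∈ T.domPow (n + 1)) : x ∈ T.domPow n := by
  induction n generalizing x with
  | zero => trivial
  | succ n ih => exact ⟨hx.1, ih hx.2⟩

lemma pw_mem_dom {k : ℕ} : ∀ {x : 𝓗}, x ∈ T.domPow (k + 1) → T.pw k x ∈ T.dom := by
  induction k with
  | zero => intro x hx; exact hx.1
  | succ k ih =>
      intro x hx
      rw [T.pw_succ_apply]
      exact ih hx.2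

/-- Symmetry of powers on `D^∞`. -/
lemma symm_pw (hT : T.Symmetric) (k : ℕ) {x y : 𝓗} (hx : x ∈ T.Dinf) (hy : y ∈ T.Dinf) :
    ⟪T.pw k x, y⟫ = ⟪x, T.pw k y⟫ := by
  induction k generalizing x with
  | zero => rfl
  | succ k ih =>
      rw [T.pw_succ_apply, ih (T.Dinf_op_mem hx), T.pw_succ_apply']
      exact hT x (T.Dinf_mem_dom hx) (T.pw k y) (T.Dinf_mem_dom (T.Dinf_pw_mem k hy))

/-- A self-adjoint operator is (sequentially) closed. -/
lemma IsSelfAdjoint.closedSeq (hT : T.IsSelfAdjoint) {u : ℕ → 𝓗} {x y : 𝓗}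
    (hu : ∀ j, u j ∈ T.dom) (hux : Tendsto u atTop (nhds x))
    (huy : Tendsto (fun j => T.op (u j)) atTop (nhds y)) : x ∈ T.dom ∧ T.op x = y := by
  refine hT.2.2 x y fun z hz => ?_
  have h1 : Tendsto (fun j => (⟪T.op z, u j⟫ : ℂ)) atTop (nhds ⟪T.op z, x⟫) :=
    Filter.Tendsto.inner tendsto_const_nhds hux
  have h2 : Tendsto (fun j => (⟪T.op z, u j⟫ : ℂ)) atTop (nhds ⟪z, y⟫) := by
    have : ∀ j, (⟪T.op z, u j⟫ : ℂ) = ⟪z, T.op (u j)⟫ := fun j => hT.2.1 z hz (u j) (hu j)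
    simp only [this]
    exact Filter.Tendsto.inner tendsto_const_nhds huy
  exact tendsto_nhds_unique h1 h2

/-- Completeness of `D^∞` with respect to the graph seminorms of a closed operator. -/
lemma complete_pw
    (hcl : ∀ (u : ℕ → 𝓗) (x y : 𝓗), (∀ j, u j ∈ T.dom) → Tendsto u atTop (nhds x) →
      Tendsto (fun j => T.op (u j)) atTop (nhds y) → x ∈ T.dom ∧ T.op x = y)
    (u : ℕ → 𝓗) (hu : ∀ j, u j ∈ T.Dinf) (hc : ∀ k, CauchySeq fun j => T.pw k (u j)) :
    ∃ x ∈ T.Dinf, ∀ k, Tendsto (fun j => T.pw k (u j)) atTop (nhds (T.pw k x)) := by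
  choose y hy using fun k => cauchySeq_tendsto_of_complete (hc k)
  have key : ∀ k, y k ∈ T.dom ∧ T.op (y k) = y (k + 1) := by
    intro k
    refine hcl (fun j => T.pw k (u j)) (y k) (y (k + 1))
      (fun j => T.Dinf_mem_dom (T.Dinf_pw_mem k (hu j))) (hy k) ?_
    have : (fun j => T.op (T.pw k (u j))) = fun j => T.pw (k + 1) (u j) := by
      funext j; rw [T.pw_succ_apply']
    rw [this]; exact hy (k + 1)
  have hpw : ∀ k, T.pw k (y 0) = y k := by
    intro k
    induction k with
    | zero => rfl
    | succ k ih => rw [T.pw_succ_apply', ih, (key k).2]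
  have hmem : ∀ n k, y k ∈ T.domPow n := by
    intro n
    induction n with
    | zero => intro k; trivial
    | succ n ih => exact fun k => ⟨(key k).1, by rw [(key k).2]; exact ih (k + 1)⟩
  refine ⟨y 0, mem_Dinf_iff.2 fun n => hmem n 0, fun k => ?_⟩
  rw [hpw k]; exact hy k

end Op

/-- A gliding-hump (Banach–Steinhaus type) lemma: a family of inner-product functionals on a
(sequentially) graph-complete subspace which is pointwise bounded is equicontinuous with
respect to the graph seminorms. -/
lemma ubp (V : Set 𝓗) (h0V : (0 : 𝓗) ∈ V)
    (hsmul : ∀ (c : ℂ) {x : 𝓗}, x ∈ V → c • x ∈ V)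
    (hadd : ∀ {x y : 𝓗}, x ∈ V → y ∈ V → x + y ∈ V)
    (T : ℕ → 𝓗 → 𝓗)
    (hT0 : ∀ x, T 0 x = x)
    (hTadd : ∀ k (x y : 𝓗), T k (x + y) = T k x + T k y)
    (hTsmul : ∀ k (c : ℂ) (x : 𝓗), T k (c • x) = c • T k x)
    (hcomp : ∀ u : ℕ → 𝓗, (∀ j, u j ∈ V) → (∀ k, CauchySeq fun j => T k (u j)) →
      ∃ x ∈ V, ∀ k, Filter.Tendsto (fun j => T k (u j)) Filter.atTop (nhds (T k x)))
    {ι : Type*} (g : ι → 𝓗)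
    (hpt : ∀ x ∈ V, ∃ M, ∀ i, ‖(⟪x, g i⟫ : ℂ)‖ ≤ M) :
    ∃ C m, ∀ x ∈ V, ∀ i, ‖(⟪x, g i⟫ : ℂ)‖ ≤ C * ∑ k ∈ Finset.range m, ‖T k x‖ := by
  rcases isEmpty_or_nonempty ι with hι | hι
  · exact ⟨0, 0, fun x _ i => isEmptyElim i⟩
  by_contra hcon
  push_neg at hcon
  have hM : ∀ s : 𝓗, ∃ M, 0 ≤ M ∧ (s ∈ V → ∀ i, ‖(⟪s, g i⟫ : ℂ)‖ ≤ M) := by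
    intro s
    by_cases hs : s ∈ V
    · obtain ⟨M, hM⟩ := hpt s hs
      exact ⟨max M 0, le_max_right _ _, fun _ i => (hM i).trans (le_max_left _ _)⟩
    · exact ⟨0, le_refl _, fun h => absurd h hs⟩
  choose Mf hMf0 hMf using hM
  -- step lemma
  have step : ∀ ε : ℝ, 0 < ε → ∀ R : ℝ, ∀ mh : ℕ, ∃ x ∈ V, ∃ i,
      (∀ k ≤ mh, ‖T k x‖ ≤ ε) ∧ R < ‖(⟪x, g i⟫ : ℂ)‖ := by
    intro ε hε R mh
    obtain ⟨x, hxV, i, hxi⟩ := hcon ((max R 0 + 1) / ε) (mh + 1)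
    set Ssum := ∑ k ∈ Finset.range (mh + 1), ‖T k x‖ with hS
    have hS0 : 0 ≤ Ssum := Finset.sum_nonneg fun _ _ => norm_nonneg _
    have hSpos : 0 < Ssum := by
      rcases hS0.lt_or_eq with h | h
      · exact h
      · exfalso
        have hmem : (0 : ℕ) ∈ Finset.range (mh + 1) := Finset.mem_range.2 (Nat.succ_pos _)
        have h1 : ‖T 0 x‖ ≤ Ssum := Finset.single_le_sum (f := fun k => ‖T k x‖)
          (fun _ _ => norm_nonneg _) hmem
        rw [hT0] at h1
        have hx0 : x = 0 := norm_eq_zero.1 (le_antisymm (by linarith) (norm_nonneg _))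
        rw [hx0, inner_zero_left, norm_zero, ← h, mul_zero] at hxi
        exact lt_irrefl _ hxi
    have hSne : Ssum ≠ 0 := ne_of_gt hSpos
    have hcoef : ‖((ε / Ssum : ℝ) : ℂ)‖ = ε / Ssum := by
      rw [Complex.norm_real, Real.norm_eq_abs, abs_of_pos (div_pos hε hSpos)]
    refine ⟨((ε / Ssum : ℝ) : ℂ) • x, hsmul _ hxV, i, ?_, ?_⟩
    · intro k hk
      rw [hTsmul, norm_smul, hcoef]
      have hk' : ‖T k x‖ ≤ Ssum := Finset.single_le_sum (f := fun k => ‖T k x‖)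
        (fun _ _ => norm_nonneg _) (Finset.mem_range.2 (Nat.lt_succ_of_le hk))
      calc ε / Ssum * ‖T k x‖ ≤ ε / Ssum * Ssum := by
            apply mul_le_mul_of_nonneg_left hk' (le_of_lt (div_pos hε hSpos))
        _ = ε := div_mul_cancel₀ _ hSne
    · rw [inner_smul_left, norm_mul, RCLike.norm_conj, hcoef]
      have h2 : ε / Ssum * ((max R 0 + 1) / ε * Ssum) < ε / Ssum * ‖(⟪x, g i⟫ : ℂ)‖ :=
        mul_lt_mul_of_pos_left hxi (div_pos hε hSpos)
      have h3 : ε / Ssum * ((max R 0 + 1) / ε * Ssum) = max R 0 + 1 := by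
        field_simp
      refine lt_of_le_of_lt ?_ (h3 ▸ h2)
      exact (le_max_left R 0).trans (le_of_lt (lt_add_one _))
  have hstep' : ∀ (j : ℕ) (s : 𝓗) (G : ℝ), ∃ p : 𝓗 × ι, p.1 ∈ V ∧
      (∀ k ≤ j, ‖T k p.1‖ ≤ (1/3 : ℝ) ^ j / (1 + max G 0)) ∧
      ((j : ℝ) + 2 + Mf s) < ‖(⟪p.1, g p.2⟫ : ℂ)‖ := by
    intro j s G
    have hpos : 0 < (1/3 : ℝ) ^ j / (1 + max G 0) := by positivity
    obtain ⟨x, hxV, i, h1, h2⟩ := step _ hpos ((j : ℝ) + 2 + Mf s) j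
    exact ⟨⟨x, i⟩, hxV, h1, h2⟩
  choose F hF1 hF2 hF3 using hstep'
  let st : ℕ → 𝓗 × ℝ := fun j => Nat.rec (motive := fun _ => 𝓗 × ℝ) ((0 : 𝓗), (0 : ℝ))
    (fun j p => (p.1 + (F j p.1 p.2).1, max p.2 ‖g (F j p.1 p.2).2‖)) j
  let ss : ℕ → 𝓗 := fun j => (st j).1
  let G : ℕ → ℝ := fun j => (st j).2
  let xx : ℕ → 𝓗 := fun j => (F j (ss j) (G j)).1
  let ii : ℕ → ι := fun j => (F j (ss j) (G j)).2
  have hssucc : ∀ j, ss (j + 1) = ss j + xx j := fun j => rfl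
  have hGsucc : ∀ j, G (j + 1) = max (G j) ‖g (ii j)‖ := fun j => rfl
  have hxV : ∀ j, xx j ∈ V := fun j => hF1 j (ss j) (G j)
  have hsV : ∀ j, ss j ∈ V := by
    intro j
    induction j with
    | zero => exact h0V
    | succ j ih => rw [hssucc j]; exact hadd ih (hxV j)
  have hG0 : ∀ j, 0 ≤ G j := by
    intro j
    induction j with
    | zero => exact le_refl _
    | succ j ih => rw [hGsucc j]; exact ih.trans (le_max_left _ _)
  have hx_small : ∀ j k, k ≤ j → ‖T k (xx j)‖ ≤ (1/3 : ℝ) ^ j / (1 + G j) := by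
    intro j k hk
    have := hF2 j (ss j) (G j) k hk
    rwa [max_eq_left (hG0 j)] at this
  have hx_small' : ∀ j k, k ≤ j → ‖T k (xx j)‖ ≤ (1/3 : ℝ) ^ j := by
    intro j k hk
    refine (hx_small j k hk).trans ?_
    apply div_le_self (by positivity) (by linarith [hG0 j])
  have hgmono : ∀ j l, j < l → ‖g (ii j)‖ ≤ G l := by
    intro j l hjl
    induction l with
    | zero => omega
    | succ l ih =>
        rcases Nat.lt_succ_iff_lt_or_eq.1 hjl with h | h
        · exact (ih h).trans (by rw [hGsucc l]; exact le_max_left _ _)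
        · subst h; rw [hGsucc j]; exact le_max_right _ _
  have hprod : ∀ j l, j < l → ‖xx l‖ * ‖g (ii j)‖ ≤ (1/3 : ℝ) ^ l := by
    intro j l hjl
    have h1 : ‖xx l‖ ≤ (1/3 : ℝ) ^ l / (1 + G l) := by
      have := hx_small l 0 (Nat.zero_le _); rwa [hT0] at this
    have h2 : ‖g (ii j)‖ ≤ 1 + G l := (hgmono j l hjl).trans (by linarith)
    calc ‖xx l‖ * ‖g (ii j)‖ ≤ (1/3 : ℝ) ^ l / (1 + G l) * (1 + G l) :=
          mul_le_mul h1 h2 (norm_nonneg _)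
            (div_nonneg (by positivity) (by linarith [hG0 l]))
      _ = (1/3 : ℝ) ^ l := div_mul_cancel₀ _ (by have := hG0 l; intro hc; linarith)
  have hsum : ∀ j, ss j = ∑ l ∈ Finset.range j, xx l := by
    intro j
    induction j with
    | zero => rfl
    | succ j ih => rw [hssucc j, ih, Finset.sum_range_succ]
  have hcauchy : ∀ k, CauchySeq fun j => T k (ss j) := by
    intro k
    set Ck := 1 + ∑ l ∈ Finset.range k, ‖T k (xx l)‖ * 3 ^ l with hCkdef
    have hCk1 : (1 : ℝ) ≤ Ck := by
      have : 0 ≤ ∑ l ∈ Finset.range k, ‖T k (xx l)‖ * 3 ^ l :=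
        Finset.sum_nonneg fun _ _ => by positivity
      linarith
    have hCk : ∀ j, ‖T k (xx j)‖ ≤ Ck * (1/3 : ℝ) ^ j := by
      intro j
      rcases le_or_gt k j with h | h
      · exact (hx_small' j k h).trans (le_mul_of_one_le_left (by positivity) hCk1)
      · have h1 : ‖T k (xx j)‖ * 3 ^ j ≤ Ck := by
          have := Finset.single_le_sum (f := fun l => ‖T k (xx l)‖ * 3 ^ l)
            (fun _ _ => by positivity) (Finset.mem_range.2 h)
          beta_reduce at this
          linarith
        have h3 : Ck = Ck * (1/3 : ℝ) ^ j * 3 ^ j := by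
          rw [mul_assoc, ← mul_pow]
          norm_num
        rw [h3] at h1
        exact le_of_mul_le_mul_right h1 (pow_pos (by norm_num) j)
    apply cauchySeq_of_le_geometric (1/3) Ck (by norm_num)
    intro n
    rw [dist_eq_norm]
    have heq : T k (ss n) - T k (ss (n + 1)) = -(T k (xx n)) := by
      rw [hssucc n, hTadd]; abel
    rw [heq, norm_neg]
    exact hCk n
  obtain ⟨z, hzV, hzlim⟩ := hcomp ss hsV hcauchy
  have hslim : Filter.Tendsto ss Filter.atTop (nhds z) := by
    have := hzlim 0
    simpa [hT0] using this
  have htail : ∀ j, ‖z - ss (j + 1)‖ * ‖g (ii j)‖ ≤ 1 := by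
    intro j
    have h1 : Filter.Tendsto (fun j' => ‖ss j' - ss (j + 1)‖ * ‖g (ii j)‖) Filter.atTop
        (nhds (‖z - ss (j + 1)‖ * ‖g (ii j)‖)) :=
      ((hslim.sub tendsto_const_nhds).norm).mul_const _
    refine le_of_tendsto h1 ?_
    filter_upwards [Filter.eventually_ge_atTop (j + 1)] with j' hj'
    have hdiff : ss j' - ss (j + 1) = ∑ l ∈ Finset.Ico (j + 1) j', xx l := by
      rw [hsum j', hsum (j + 1), Finset.sum_Ico_eq_sub _ hj']
    calc ‖ss j' - ss (j + 1)‖ * ‖g (ii j)‖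
        ≤ (∑ l ∈ Finset.Ico (j + 1) j', ‖xx l‖) * ‖g (ii j)‖ := by
          rw [hdiff]
          exact mul_le_mul_of_nonneg_right (norm_sum_le _ _) (norm_nonneg _)
      _ = ∑ l ∈ Finset.Ico (j + 1) j', ‖xx l‖ * ‖g (ii j)‖ := Finset.sum_mul ..
      _ ≤ ∑ l ∈ Finset.Ico (j + 1) j', (1/3 : ℝ) ^ l := by
          refine Finset.sum_le_sum fun l hl => ?_
          exact hprod j l (by have := (Finset.mem_Ico.1 hl).1; omega)
      _ ≤ (1/3 : ℝ) ^ (j + 1) / (1 - 1/3) := geom_sum_Ico_le_of_lt_one (by norm_num) (by norm_num)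
      _ ≤ 1 := by
          have h3 : (1/3 : ℝ) ^ (j + 1) ≤ (1/3 : ℝ) ^ 1 :=
            pow_le_pow_of_le_one (by norm_num) (by norm_num) (by omega)
          rw [div_le_one (by norm_num)]
          simpa using h3.trans (by norm_num)
  have hgrow : ∀ j : ℕ, (j : ℝ) + 1 ≤ ‖(⟪z, g (ii j)⟫ : ℂ)‖ := by
    intro j
    have hx_ineq : ((j : ℝ) + 2 + Mf (ss j)) < ‖(⟪xx j, g (ii j)⟫ : ℂ)‖ := hF3 j (ss j) (G j)
    have hsj : ‖(⟪ss j, g (ii j)⟫ : ℂ)‖ ≤ Mf (ss j) := hMf (ss j) (hsV j) (ii j)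
    have h2 : ‖(⟪z - ss (j + 1), g (ii j)⟫ : ℂ)‖ ≤ 1 :=
      (norm_inner_le_norm _ _).trans (htail j)
    have hdecomp : (⟪z, g (ii j)⟫ : ℂ) =
        ⟪z - ss (j + 1), g (ii j)⟫ + ⟪ss j, g (ii j)⟫ + ⟪xx j, g (ii j)⟫ := by
      rw [← inner_add_left, ← inner_add_left]
      congr 1
      rw [hssucc j]; abel
    have htri : ‖(⟪xx j, g (ii j)⟫ : ℂ)‖ ≤ ‖(⟪z, g (ii j)⟫ : ℂ)‖
        + ‖(⟪z - ss (j + 1), g (ii j)⟫ : ℂ)‖ + ‖(⟪ss j, g (ii j)⟫ : ℂ)‖ := by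
      have : (⟪xx j, g (ii j)⟫ : ℂ) = ⟪z, g (ii j)⟫ -
          ⟪z - ss (j + 1), g (ii j)⟫ - ⟪ss j, g (ii j)⟫ := by
        rw [hdecomp]; ring
      rw [this]
      refine (norm_sub_le _ _).trans ?_
      have := norm_sub_le (⟪z, g (ii j)⟫ : ℂ) (⟪z - ss (j + 1), g (ii j)⟫ : ℂ)
      linarith
    linarith
  obtain ⟨Mz, hMz⟩ := hpt z hzV
  obtain ⟨j, hj⟩ := exists_nat_gt Mz
  have h1 := (hgrow j).trans (hMz (ii j))
  have : (j : ℝ) < Mz := by linarith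
  linarith

/-- Two vectors with equal inner products against a dense set are equal. -/
lemma eq_of_inner_dense {A : Set 𝓗} (hd : Dense A) {u v : 𝓗}
    (h : ∀ y ∈ A, (⟪y, u⟫ : ℂ) = ⟪y, v⟫) : u = v := by
  have h0 : ∀ y : 𝓗, (⟪y, u - v⟫ : ℂ) = 0 := by
    have hc : IsClosed {y : 𝓗 | (⟪y, u - v⟫ : ℂ) = 0} :=
      isClosed_eq (Continuous.inner continuous_id continuous_const) continuous_const
    have hsub : A ⊆ {y : 𝓗 | (⟪y, u - v⟫ : ℂ) = 0} := by
      intro y hy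
      simp only [Set.mem_setOf_eq, inner_sub_right, h y hy, sub_self]
    have := hc.closure_subset_iff.2 hsub
    intro y
    exact this (hd.closure_eq ▸ Set.mem_univ y : y ∈ closure A)
  have := h0 (u - v)
  rwa [inner_self_eq_zero, sub_eq_zero] at this

/-- The central domination lemma: on `D = D^∞(T)`, each graph seminorm of a symmetric
operator `S` with `D^∞(S) = D^∞(T)` is dominated by the graph seminorms of `T`. -/
lemma dominate (S T : Op 𝓗) (hST : S.Dinf = T.Dinf) (hSsym : S.Symmetric)
    (hDense : Dense T.Dinf)
    (hTcl : ∀ (u : ℕ → 𝓗) (x y : 𝓗), (∀ j, u j ∈ T.dom) →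
      Filter.Tendsto u Filter.atTop (nhds x) →
      Filter.Tendsto (fun j => T.op (u j)) Filter.atTop (nhds y) → x ∈ T.dom ∧ T.op x = y)
    (n : ℕ) :
    ∃ C m, 0 ≤ C ∧ ∀ φ ∈ T.Dinf, ‖S.pw n φ‖ ≤ C * ∑ k ∈ Finset.range m, ‖T.pw k φ‖ := by
  have hsymm_pw : ∀ {x y : 𝓗}, x ∈ T.Dinf → y ∈ T.Dinf →
      (⟪S.pw n x, y⟫ : ℂ) = ⟪x, S.pw n y⟫ := fun hx hy =>
    Op.symm_pw hSsym n (hST ▸ hx) (hST ▸ hy)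
  obtain ⟨C, m, hC⟩ := ubp T.Dinf T.Dinf_zero_mem (fun c {x} hx => T.Dinf_smul_mem c hx)
    (fun {x y} hx hy => T.Dinf_add_mem hx hy) (fun k => T.pw k) (fun _ => rfl)
    (fun k x y => T.pw_map_add k x y) (fun k c x => T.pw_map_smul k c x)
    (T.complete_pw hTcl)
    (fun ψ : {ψ : 𝓗 // ψ ∈ T.Dinf ∧ ‖ψ‖ ≤ 1} => S.pw n (ψ : 𝓗))
    (by
      intro φ hφ
      refine ⟨‖S.pw n φ‖, fun ψ => ?_⟩
      rw [← hsymm_pw hφ ψ.2.1]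
      calc ‖(⟪S.pw n φ, (ψ : 𝓗)⟫ : ℂ)‖ ≤ ‖S.pw n φ‖ * ‖(ψ : 𝓗)‖ := norm_inner_le_norm _ _
        _ ≤ ‖S.pw n φ‖ * 1 := mul_le_mul_of_nonneg_left ψ.2.2 (norm_nonneg _)
        _ = ‖S.pw n φ‖ := mul_one _)
  refine ⟨max C 0, m, le_max_right _ _, fun φ hφ => ?_⟩
  have hsum0 : 0 ≤ ∑ k ∈ Finset.range m, ‖T.pw k φ‖ :=
    Finset.sum_nonneg fun _ _ => norm_nonneg _
  have hbound : ∀ ψ : {ψ : 𝓗 // ψ ∈ T.Dinf ∧ ‖ψ‖ ≤ 1},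
      ‖(⟪S.pw n φ, (ψ : 𝓗)⟫ : ℂ)‖ ≤ max C 0 * ∑ k ∈ Finset.range m, ‖T.pw k φ‖ := by
    intro ψ
    rw [hsymm_pw hφ ψ.2.1]
    exact (hC φ hφ ψ).trans (mul_le_mul_of_nonneg_right (le_max_left _ _) hsum0)
  set v := S.pw n φ with hv
  by_cases hv0 : v = 0
  · rw [hv0, norm_zero]; positivity
  obtain ⟨u, huD, hulim⟩ := mem_closure_iff_seq_limit.1 (hDense v)
  have hnv : 0 < ‖v‖ := norm_pos_iff.2 hv0
  set c : ℕ → ℝ := fun j => max ‖u j‖ ‖v‖ with hc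
  have hcpos : ∀ j, 0 < c j := fun j => lt_of_lt_of_le hnv (le_max_right _ _)
  have hclim : Filter.Tendsto c Filter.atTop (nhds ‖v‖) := by
    have h1 : Filter.Tendsto (fun j => ‖u j‖) Filter.atTop (nhds ‖v‖) := hulim.norm
    have := h1.max (tendsto_const_nhds (x := ‖v‖))
    simpa [max_self] using this
  have hψmem : ∀ j, (((c j)⁻¹ : ℝ) : ℂ) • u j ∈ T.Dinf ∧ ‖(((c j)⁻¹ : ℝ) : ℂ) • u j‖ ≤ 1 := by
    intro j
    refine ⟨T.Dinf_smul_mem _ (huD j), ?_⟩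
    rw [norm_smul, Complex.norm_real, Real.norm_eq_abs, abs_of_pos (inv_pos.2 (hcpos j))]
    calc (c j)⁻¹ * ‖u j‖ ≤ (c j)⁻¹ * c j :=
          mul_le_mul_of_nonneg_left (le_max_left _ _) (le_of_lt (inv_pos.2 (hcpos j)))
      _ = 1 := inv_mul_cancel₀ (ne_of_gt (hcpos j))
  have heq : ∀ j, ‖(⟪v, (((c j)⁻¹ : ℝ) : ℂ) • u j⟫ : ℂ)‖ = (c j)⁻¹ * ‖(⟪v, u j⟫ : ℂ)‖ := by
    intro j
    rw [inner_smul_right, norm_mul, Complex.norm_real, Real.norm_eq_abs,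
      abs_of_pos (inv_pos.2 (hcpos j))]
  have hval : ‖v‖⁻¹ * ‖(⟪v, v⟫ : ℂ)‖ = ‖v‖ := by
    have h1 : ‖(⟪v, v⟫ : ℂ)‖ = ‖v‖ ^ 2 := by
      rw [inner_self_eq_norm_sq_to_K, norm_pow, RCLike.norm_ofReal, abs_of_pos hnv]
    rw [h1, sq, inv_mul_cancel_left₀ (ne_of_gt hnv)]
  have hlim2 : Filter.Tendsto (fun j => ‖(⟪v, (((c j)⁻¹ : ℝ) : ℂ) • u j⟫ : ℂ)‖)
      Filter.atTop (nhds ‖v‖) := by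
    have h1 : Filter.Tendsto (fun j => (⟪v, u j⟫ : ℂ)) Filter.atTop (nhds (⟪v, v⟫ : ℂ)) :=
      Filter.Tendsto.inner tendsto_const_nhds hulim
    have h2 : Filter.Tendsto (fun j => (c j)⁻¹ * ‖(⟪v, u j⟫ : ℂ)‖) Filter.atTop
        (nhds (‖v‖⁻¹ * ‖(⟪v, v⟫ : ℂ)‖)) := (hclim.inv₀ (ne_of_gt hnv)).mul h1.norm
    rw [← hval]
    have hfun : (fun j => ‖(⟪v, (((c j)⁻¹ : ℝ) : ℂ) • u j⟫ : ℂ)‖)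
        = fun j => (c j)⁻¹ * ‖(⟪v, u j⟫ : ℂ)‖ := funext heq
    rw [hfun]
    exact h2
  refine le_of_tendsto hlim2 (Filter.Eventually.of_forall fun j => hbound ⟨_, hψmem j⟩)

section FnCalcAux

variable {H0 : Op 𝓗} (S0 : FnCalc H0 1)

/-- The indicator of `[1, L]`. -/
noncomputable def indF (L : ℝ) : ℝ → ℝ := Set.indicator (Set.Icc 1 L) fun _ => 1

/-- The indicator of `(L, ∞)`. -/
noncomputable def chiF (L : ℝ) : ℝ → ℝ := Set.indicator (Set.Ioi L) fun _ => 1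

/-- The function `t ↦ t⁻¹` cut off to `(L, ∞)`. -/
noncomputable def gF (L : ℝ) : ℝ → ℝ := Set.indicator (Set.Ioi L) fun t => t⁻¹

lemma indF_meas (L : ℝ) : Measurable (indF L) :=
  measurable_const.indicator measurableSet_Icc

lemma chiF_meas (L : ℝ) : Measurable (chiF L) :=
  measurable_const.indicator measurableSet_Ioi

lemma gF_meas (L : ℝ) : Measurable (gF L) :=
  measurable_inv.indicator measurableSet_Ioi

lemma Q_eq_Phi (L : ℝ) : S0.Q L = S0.Φ (indF L) := rfl

lemma indF_poly (L : ℝ) (j : ℕ) : ∃ M, ∀ t : ℝ, 1 ≤ t → |t ^ j * indF L t| ≤ M := by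
  refine ⟨(max 1 L) ^ j, fun t ht => ?_⟩
  by_cases h : t ∈ Set.Icc (1 : ℝ) L
  · rw [indF, Set.indicator_of_mem h, mul_one, abs_of_nonneg (by positivity)]
    exact pow_le_pow_left₀ (by linarith) (le_max_of_le_right h.2) j
  · rw [indF, Set.indicator_of_notMem h, mul_zero, abs_zero]
    positivity

lemma Phi_congr {f g : ℝ → ℝ} (hf : Measurable f) (hg : Measurable g)
    (h : ∀ t : ℝ, 1 ≤ t → f t = g t) : S0.Φ f = S0.Φ g := by
  have h1 : S0.Φ f = S0.Φ (fun t => g t + (f t - g t)) := by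
    congr 1; funext t; ring
  rw [h1, S0.Φ_add g (fun t => f t - g t) hg (hf.sub hg),
    S0.Φ_supp (fun t => f t - g t) (hf.sub hg) (fun t ht => by rw [h t ht]; ring), add_zero]

lemma Phi_pw : ∀ (k : ℕ) (f : ℝ → ℝ), Measurable f →
    (∀ j : ℕ, ∃ M, ∀ t : ℝ, 1 ≤ t → |t ^ j * f t| ≤ M) →
    ∀ x : 𝓗, S0.Φ f x ∈ H0.domPow k ∧
      H0.pw k (S0.Φ f x) = S0.Φ (fun t => t ^ k * f t) x := by
  intro k
  induction k with
  | zero =>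
      intro f hf hpoly x
      refine ⟨trivial, ?_⟩
      rw [H0.pw_zero_apply, show (fun t : ℝ => t ^ 0 * f t) = f from
        funext fun t => by rw [pow_zero, one_mul]]
  | succ k ih =>
      intro f hf hpoly x
      have hf1 : Measurable fun t : ℝ => t * f t := measurable_id.mul hf
      have hb1 : ∃ M, ∀ t : ℝ, 1 ≤ t → |t * f t| ≤ M := by
        obtain ⟨M, hM⟩ := hpoly 1
        exact ⟨M, fun t ht => by simpa using hM t ht⟩
      have hdom := S0.Φ_dom f hf hb1 x
      have hpoly1 : ∀ j : ℕ, ∃ M, ∀ t : ℝ, 1 ≤ t → |t ^ j * (t * f t)| ≤ M := by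
        intro j
        obtain ⟨M, hM⟩ := hpoly (j + 1)
        refine ⟨M, fun t ht => ?_⟩
        have h := hM t ht
        have he : t ^ j * (t * f t) = t ^ (j + 1) * f t := by ring
        rwa [he]
      have ihx := ih (fun t => t * f t) hf1 hpoly1 x
      refine ⟨⟨hdom.1, by rw [hdom.2]; exact ihx.1⟩, ?_⟩
      rw [H0.pw_succ_apply, hdom.2, ihx.2,
        show (fun t : ℝ => t ^ k * (t * f t)) = fun t => t ^ (k + 1) * f t from
          funext fun t => by ring]

lemma Phi_mem_Dinf {f : ℝ → ℝ} (hf : Measurable f)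
    (hpoly : ∀ j : ℕ, ∃ M, ∀ t : ℝ, 1 ≤ t → |t ^ j * f t| ≤ M) (x : 𝓗) :
    S0.Φ f x ∈ H0.Dinf :=
  Op.mem_Dinf_iff.2 fun n => (Phi_pw S0 n f hf hpoly x).1

lemma Phi_comm_op (hsa0 : H0.IsSelfAdjoint) {f : ℝ → ℝ} (hf : Measurable f)
    (hb1 : ∃ M, ∀ t : ℝ, 1 ≤ t → |t * f t| ≤ M) {x : 𝓗} (hx : x ∈ H0.dom) :
    S0.Φ f (H0.op x) = S0.Φ (fun t => t * f t) x := by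
  refine eq_of_inner_dense hsa0.1 fun y hy => ?_
  have h1 := S0.Φ_dom f hf hb1 y
  calc (⟪y, S0.Φ f (H0.op x)⟫ : ℂ) = ⟪S0.Φ f y, H0.op x⟫ := (S0.Φ_symm f y (H0.op x)).symm
    _ = ⟪H0.op (S0.Φ f y), x⟫ := (hsa0.2.1 (S0.Φ f y) h1.1 x hx).symm
    _ = ⟪S0.Φ (fun t => t * f t) y, x⟫ := by rw [h1.2]
    _ = ⟪y, S0.Φ (fun t => t * f t) x⟫ := S0.Φ_symm _ y x

lemma Phi_comm_pw (hsa0 : H0.IsSelfAdjoint) : ∀ (k : ℕ) (f : ℝ → ℝ), Measurable f →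
    (∀ j : ℕ, ∃ M, ∀ t : ℝ, 1 ≤ t → |t ^ j * f t| ≤ M) →
    ∀ {x : 𝓗}, x ∈ H0.domPow k →
      S0.Φ f (H0.pw k x) = S0.Φ (fun t => t ^ k * f t) x := by
  intro k
  induction k with
  | zero =>
      intro f hf hpoly x hx
      rw [H0.pw_zero_apply, show (fun t : ℝ => t ^ 0 * f t) = f from
        funext fun t => by rw [pow_zero, one_mul]]
  | succ k ih =>
      intro f hf hpoly x hx
      have hopx : H0.op x ∈ H0.domPow k := hx.2
      rw [H0.pw_succ_apply, ih f hf hpoly hopx]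
      have hfk : Measurable fun t : ℝ => t ^ k * f t := (measurable_id.pow_const k).mul hf
      have hbk : ∃ M, ∀ t : ℝ, 1 ≤ t → |t * (t ^ k * f t)| ≤ M := by
        obtain ⟨M, hM⟩ := hpoly (k + 1)
        refine ⟨M, fun t ht => ?_⟩
        have he : t * (t ^ k * f t) = t ^ (k + 1) * f t := by ring
        rw [he]; exact hM t ht
      rw [Phi_comm_op S0 hsa0 hfk hbk hx.1,
        show (fun t : ℝ => t * (t ^ k * f t)) = fun t => t ^ (k + 1) * f t from
          funext fun t => by ring]

lemma Q_mem_Dinf (L : ℝ) (x : 𝓗) : S0.Q L x ∈ H0.Dinf := by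
  rw [Q_eq_Phi]
  exact Phi_mem_Dinf S0 (indF_meas L) (indF_poly L) x

lemma Q_pw_comm (hsa0 : H0.IsSelfAdjoint) (L : ℝ) (k : ℕ) {x : 𝓗} (hx : x ∈ H0.Dinf) :
    H0.pw k (S0.Q L x) = S0.Q L (H0.pw k x) := by
  rw [Q_eq_Phi,
    (Phi_pw S0 k (indF L) (indF_meas L) (indF_poly L) x).2,
    Phi_comm_pw S0 hsa0 k (indF L) (indF_meas L) (indF_poly L) (Op.mem_Dinf_iff.1 hx k)]

lemma Q_norm_le (L : ℝ) (x : 𝓗) : ‖S0.Q L x‖ ≤ ‖x‖ := by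
  rw [Q_eq_Phi]
  have := S0.Φ_norm (indF L) 1 (fun t _ => by
    by_cases h : t ∈ Set.Icc (1 : ℝ) L
    · rw [indF, Set.indicator_of_mem h]; norm_num
    · rw [indF, Set.indicator_of_notMem h]; norm_num) x
  simpa using this

lemma Q_pw_norm (L : ℝ) (hL : 1 ≤ L) (k : ℕ) (x : 𝓗) :
    ‖H0.pw k (S0.Q L x)‖ ≤ L ^ k * ‖x‖ := by
  rw [Q_eq_Phi, (Phi_pw S0 k (indF L) (indF_meas L) (indF_poly L) x).2]
  refine S0.Φ_norm _ (L ^ k) (fun t ht => ?_) x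
  by_cases h : t ∈ Set.Icc (1 : ℝ) L
  · rw [indF, Set.indicator_of_mem h, mul_one, abs_of_nonneg (by positivity)]
    exact pow_le_pow_left₀ (by linarith) h.2 k
  · rw [indF, Set.indicator_of_notMem h, mul_zero, abs_zero]
    positivity

lemma Phi_chi_apply (L : ℝ) (hL : 1 ≤ L) (x : 𝓗) : S0.Φ (chiF L) x = x - S0.Q L x := by
  have hcong : S0.Φ (fun t => indF L t + chiF L t) = S0.Φ (fun _ => 1) := by
    refine Phi_congr S0 ((indF_meas L).add (chiF_meas L)) measurable_const fun t ht => ?_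
    by_cases h : t ≤ L
    · have h1 : t ∈ Set.Icc (1 : ℝ) L := ⟨ht, h⟩
      have h2 : t ∉ Set.Ioi L := by simpa using h
      rw [indF, chiF, Set.indicator_of_mem h1, Set.indicator_of_notMem h2, add_zero]
    · have h1 : t ∉ Set.Icc (1 : ℝ) L := fun hc => h hc.2
      have h2 : t ∈ Set.Ioi L := by simpa using lt_of_not_ge h
      rw [indF, chiF, Set.indicator_of_notMem h1, Set.indicator_of_mem h2, zero_add]
  have hadd := S0.Φ_add (indF L) (chiF L) (indF_meas L) (chiF_meas L)
  have h1 : S0.Q L + S0.Φ (chiF L) = 1 := by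
    rw [Q_eq_Phi, ← hadd, hcong, S0.Φ_one]
  have := congrArg (fun A : 𝓗 →L[ℂ] 𝓗 => A x) h1
  simp only [ContinuousLinearMap.add_apply, ContinuousLinearMap.one_apply] at this
  linear_combination (norm := abel) this

lemma Q_contraction (hsa0 : H0.IsSelfAdjoint) (L : ℝ) (hL : 1 ≤ L) {x : 𝓗}
    (hx : x ∈ H0.dom) : ‖x - S0.Q L x‖ ≤ L⁻¹ * ‖H0.op x‖ := by
  have hLpos : (0 : ℝ) < L := lt_of_lt_of_le one_pos hL
  have hgb : ∃ M, ∀ t : ℝ, 1 ≤ t → |t * gF L t| ≤ M := by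
    refine ⟨1, fun t ht => ?_⟩
    by_cases h : t ∈ Set.Ioi L
    · rw [gF, Set.indicator_of_mem h, mul_inv_cancel₀ (by linarith [h.out]), abs_one]
    · rw [gF, Set.indicator_of_notMem h, mul_zero, abs_zero]; norm_num
  have h1 : S0.Φ (gF L) (H0.op x) = S0.Φ (fun t => t * gF L t) x :=
    Phi_comm_op S0 hsa0 (gF_meas L) hgb hx
  have h2 : (fun t : ℝ => t * gF L t) = chiF L := by
    funext t
    by_cases h : t ∈ Set.Ioi L
    · rw [gF, chiF, Set.indicator_of_mem h, Set.indicator_of_mem h,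
        mul_inv_cancel₀ (by have := h.out; intro hc; rw [hc] at this; linarith)]
    · rw [gF, chiF, Set.indicator_of_notMem h, Set.indicator_of_notMem h, mul_zero]
  rw [← Phi_chi_apply S0 L hL x, ← h2, ← h1]
  refine S0.Φ_norm _ L⁻¹ (fun t ht => ?_) _
  by_cases h : t ∈ Set.Ioi L
  · rw [gF, Set.indicator_of_mem h, abs_of_nonneg (by positivity)]
    exact inv_anti₀ hLpos (le_of_lt h.out)
  · rw [gF, Set.indicator_of_notMem h, abs_zero]
    positivity

lemma Q_decay (hsa0 : H0.IsSelfAdjoint) {f : ℝ → ℝ} (hf : IsInF f) (k : ℕ) :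
    ∃ M, 0 ≤ M ∧ ∀ L : ℝ, 1 ≤ L → ∀ x : 𝓗,
      ‖S0.Φ f x - S0.Q L (S0.Φ f x)‖ ≤ M / L ^ k * ‖x‖ := by
  obtain ⟨M₀, hM₀⟩ := hf.2.2 k
  refine ⟨max M₀ 0, le_max_right _ _, fun L hL x => ?_⟩
  have hLpos : (0 : ℝ) < L := lt_of_lt_of_le one_pos hL
  have hmul := S0.Φ_mul (chiF L) f (chiF_meas L) hf.1.measurable
  have happ : S0.Φ (fun t => chiF L t * f t) x = S0.Φ (chiF L) (S0.Φ f x) := by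
    rw [hmul]; rfl
  rw [← Phi_chi_apply S0 L hL (S0.Φ f x), ← happ]
  refine S0.Φ_norm _ (max M₀ 0 / L ^ k) (fun t ht => ?_) x
  by_cases h : t ∈ Set.Ioi L
  · have htL : L < t := h.out
    have ht0 : (0 : ℝ) ≤ t := by linarith
    have hfpos : 0 < f t := hf.2.1 t ht0
    rw [chiF, Set.indicator_of_mem h, one_mul, abs_of_pos hfpos]
    have h1 : t ^ k * f t ≤ M₀ := hM₀ t ht0
    have htk : (0 : ℝ) < t ^ k := by positivity
    have h2 : f t ≤ M₀ / t ^ k := by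
      rw [le_div_iff₀ htk]; linarith [mul_comm (t ^ k) (f t)]
    refine h2.trans ?_
    have h3 : M₀ / t ^ k ≤ max M₀ 0 / t ^ k := (div_le_div_iff_of_pos_right htk).2 (le_max_left _ _)
    refine h3.trans ?_
    exact div_le_div_of_nonneg_left (le_max_right M₀ 0) (by positivity)
      (pow_le_pow_left₀ hLpos.le htL.le k)
  · rw [chiF, Set.indicator_of_notMem h, zero_mul, abs_zero]
    positivity

end FnCalcAux

section UAux

variable {H : Op 𝓗} {U : ℝ → 𝓗 →L[ℂ] 𝓗}

lemma U_comm_op (hU0 : U 0 = 1) (hUadd : ∀ s t : ℝ, U (s + t) = (U s).comp (U t))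
    (hUderiv : ∀ x ∈ H.dom, ∀ t : ℝ,
      HasDerivAt (fun τ : ℝ => U τ x) (Complex.I • H.op (U t x)) t)
    {x : 𝓗} (hx : x ∈ H.dom) (t : ℝ) : H.op (U t x) = U t (H.op x) := by
  have h1 : HasDerivAt (fun τ : ℝ => U τ x) (Complex.I • H.op (U t x)) t := hUderiv x hx t
  have h2 : HasDerivAt (fun s : ℝ => U (t + s) x) (Complex.I • H.op (U t x)) 0 := by
    have hg : HasDerivAt (fun s : ℝ => t + s) 1 0 := by
      simpa using (hasDerivAt_id (0 : ℝ)).const_add t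
    have h1' : HasDerivAt (fun τ : ℝ => U τ x) (Complex.I • H.op (U t x)) (t + 0) := by
      simpa using h1
    have := HasDerivAt.scomp (0 : ℝ) h1' hg
    simpa [Function.comp_def] using this
  have h3 : HasDerivAt (fun s : ℝ => U t (U s x)) (U t (Complex.I • H.op x)) 0 := by
    have h0 : HasDerivAt (fun s : ℝ => U s x) (Complex.I • H.op (U 0 x)) 0 := hUderiv x hx 0
    have h0' : HasDerivAt (fun s : ℝ => U s x) (Complex.I • H.op x) 0 := by
      rwa [hU0, ContinuousLinearMap.one_apply] at h0
    have hc : HasDerivAt (fun _ : ℝ => (U t).restrictScalars ℝ) (0 : 𝓗 →L[ℝ] 𝓗) 0 :=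
      hasDerivAt_const (0 : ℝ) _
    have h4 := hc.clm_apply h0'
    simpa using h4
  have heq : (fun s : ℝ => U (t + s) x) = fun s : ℝ => U t (U s x) := by
    funext s; rw [hUadd t s]; rfl
  rw [heq] at h2
  have huniq := h2.unique h3
  rw [map_smul] at huniq
  exact smul_right_injective 𝓗 Complex.I_ne_zero huniq

lemma U_pw (hU0 : U 0 = 1) (hUadd : ∀ s t : ℝ, U (s + t) = (U s).comp (U t))
    (hUdom : ∀ t : ℝ, ∀ x ∈ H.dom, U t x ∈ H.dom)
    (hUderiv : ∀ x ∈ H.dom, ∀ t : ℝ,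
      HasDerivAt (fun τ : ℝ => U τ x) (Complex.I • H.op (U t x)) t) :
    ∀ (n : ℕ) {x : 𝓗}, x ∈ H.Dinf → ∀ t : ℝ,
      U t x ∈ H.domPow n ∧ H.pw n (U t x) = U t (H.pw n x) := by
  intro n
  induction n with
  | zero => intro x _ t; exact ⟨trivial, rfl⟩
  | succ n ih =>
      intro x hx t
      have hxd : x ∈ H.dom := H.Dinf_mem_dom hx
      have hcomm : H.op (U t x) = U t (H.op x) := U_comm_op hU0 hUadd hUderiv hxd t
      have hop : H.op x ∈ H.Dinf := H.Dinf_op_mem hx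
      refine ⟨⟨hUdom t x hxd, ?_⟩, ?_⟩
      · rw [hcomm]; exact (ih hop t).1
      · rw [H.pw_succ_apply, hcomm, (ih hop t).2, ← H.pw_succ_apply]

lemma U_mem_Dinf (hU0 : U 0 = 1) (hUadd : ∀ s t : ℝ, U (s + t) = (U s).comp (U t))
    (hUdom : ∀ t : ℝ, ∀ x ∈ H.dom, U t x ∈ H.dom)
    (hUderiv : ∀ x ∈ H.dom, ∀ t : ℝ,
      HasDerivAt (fun τ : ℝ => U τ x) (Complex.I • H.op (U t x)) t)
    {x : 𝓗} (hx : x ∈ H.Dinf) (t : ℝ) : U t x ∈ H.Dinf :=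
  Op.mem_Dinf_iff.2 fun n => (U_pw hU0 hUadd hUdom hUderiv n hx t).1

lemma U_adjoint (hU0 : U 0 = 1) (hUadd : ∀ s t : ℝ, U (s + t) = (U s).comp (U t))
    (hUiso : ∀ (t : ℝ) (x : 𝓗), ‖U t x‖ = ‖x‖) (t : ℝ) (x y : 𝓗) :
    (⟪U t x, y⟫ : ℂ) = ⟪x, U (-t) y⟫ := by
  have hinv : ∀ z, U t (U (-t) z) = z := by
    intro z
    have h := hUadd t (-t)
    rw [show t + -t = 0 by ring, hU0] at h
    have := congrArg (fun A : 𝓗 →L[ℂ] 𝓗 => A z) h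
    simpa using this.symm
  have key := LinearIsometry.inner_map_map (𝕜 := ℂ)
    ⟨(U t).toLinearMap, hUiso t⟩ x (U (-t) y)
  calc (⟪U t x, y⟫ : ℂ) = ⟪U t x, U t (U (-t) y)⟫ := by rw [hinv]
    _ = ⟪x, U (-t) y⟫ := key

end UAux

end Aux

/-- (Proposition 49.1, parts (i), (ii), (i')) With
`V_L^t = Q⁰_L e^{iHt} Q⁰_L`: (i) for every `ψ ∈ D`, `V_L^t ψ → e^{iHt} ψ` in the graph
topology `t_H` (every seminorm `‖Hⁿ·‖` of the difference tends to `0`); (ii)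
`V_L^t → e^{iHt}` in the quasi-uniform topology `τ_*`; and (i') all time derivatives
`(d/dt)ⁿ V_L^t ψ` converge in `t_H` to `(d/dt)ⁿ e^{iHt} ψ`. -/
theorem stmt18 (H0 B : Op 𝓗) (hsa0 : H0.IsSelfAdjoint) (hge : H0.GeOne)
    (hBsymm : B.Symmetric) (hdomB : (H0.dom : Set 𝓗) ⊆ B.dom)
    (hsaH : (H0.pert B).IsSelfAdjoint)
    (S0 : FnCalc H0 1)
    (D : Set 𝓗) (hD0 : D = H0.Dinf) (hDH : D = (H0.pert B).Dinf)
    -- `U t = e^{iHt}`, the unitary group generated by `H`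
    (U : ℝ → 𝓗 →L[ℂ] 𝓗)
    (hU0 : U 0 = 1) (hUadd : ∀ s t : ℝ, U (s + t) = (U s).comp (U t))
    (hUiso : ∀ (t : ℝ) (x : 𝓗), ‖U t x‖ = ‖x‖)
    (hUdom : ∀ t : ℝ, ∀ x ∈ (H0.pert B).dom, U t x ∈ (H0.pert B).dom)
    (hUderiv : ∀ x ∈ (H0.pert B).dom, ∀ t : ℝ,
      HasDerivAt (fun τ : ℝ => U τ x) (Complex.I • (H0.pert B).op (U t x)) t) :
    -- (i) `t_H`-convergence of `V_L^t ψ` to `e^{iHt} ψ`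
    (∀ ψ ∈ D, ∀ t : ℝ, ∀ n : ℕ,
      Filter.Tendsto (fun L : ℝ =>
          ‖(H0.pert B).pw n (S0.Q L (U t (S0.Q L ψ)) - U t ψ)‖)
        Filter.atTop (nhds 0)) ∧
    -- (ii) `τ_*`-convergence of `V_L^t` to `e^{iHt}`
    (∀ f : ℝ → ℝ, IsInF f → ∀ k : ℕ, ∀ t : ℝ,
      Filter.Tendsto (fun L : ℝ => opNormOn D (fun φ =>
          H0.pw k (S0.Q L (U t (S0.Q L (S0.Φ f φ))) - U t (S0.Φ f φ))))
        Filter.atTop (nhds 0) ∧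
      Filter.Tendsto (fun L : ℝ => opNormOn D (fun φ =>
          S0.Φ f (S0.Q L (U t (S0.Q L (H0.pw k φ))) - U t (H0.pw k φ))))
        Filter.atTop (nhds 0)) ∧
    -- (i') `t_H`-convergence of all time derivatives
    (∀ ψ ∈ D, ∀ t : ℝ, ∀ n m : ℕ,
      Filter.Tendsto (fun L : ℝ =>
          ‖(H0.pert B).pw m
            (iteratedDeriv n (fun τ : ℝ => S0.Q L (U τ (S0.Q L ψ))) t
              - iteratedDeriv n (fun τ : ℝ => U τ ψ) t)‖)
        Filter.atTop (nhds 0)) := by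
  set H := H0.pert B with hHdef
  have hsym0 : H0.Symmetric := hsa0.2.1
  have hsymH : H.Symmetric := hsaH.2.1
  -- membership conversions
  have hD0' : ∀ {x : 𝓗}, x ∈ H0.Dinf → x ∈ D := fun {x} hx => by rw [hD0]; exact hx
  have hD0'' : ∀ {x : 𝓗}, x ∈ D → x ∈ H0.Dinf := fun {x} hx => by rw [hD0] at hx; exact hx
  have hDH' : ∀ {x : 𝓗}, x ∈ H.Dinf → x ∈ D := fun {x} hx => by rw [hDH]; exact hx
  have hDH'' : ∀ {x : 𝓗}, x ∈ D → x ∈ H.Dinf := fun {x} hx => by rw [hDH] at hx; exact hx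
  have hQD : ∀ (L : ℝ) (x : 𝓗), S0.Q L x ∈ D := fun L x => hD0' (Q_mem_Dinf S0 L x)
  have hsubD : ∀ {x y : 𝓗}, x ∈ D → y ∈ D → x - y ∈ D := fun hx hy =>
    hD0' (H0.Dinf_sub_mem (hD0'' hx) (hD0'' hy))
  have hpwD : ∀ (k : ℕ) {x : 𝓗}, x ∈ D → H.pw k x ∈ D := fun k {x} hx =>
    hDH' (H.Dinf_pw_mem k (hDH'' hx))
  have hUD : ∀ (t' : ℝ) {x : 𝓗}, x ∈ D → U t' x ∈ D := fun t' {x} hx =>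
    hDH' (U_mem_Dinf hU0 hUadd hUdom hUderiv (hDH'' hx) t')
  have hUpw : ∀ (j : ℕ) (t' : ℝ) {x : 𝓗}, x ∈ D → H.pw j (U t' x) = U t' (H.pw j x) :=
    fun j t' {x} hx => (U_pw hU0 hUadd hUdom hUderiv j (hDH'' hx) t').2
  -- density
  have hdenseD : Dense D := fun x =>
    mem_closure_of_tendsto (S0.Q_tendsto x) (Filter.Eventually.of_forall fun L => hQD L x)
  have hdense0 : Dense H0.Dinf := by rw [← hD0]; exact hdenseD
  have hdenseH : Dense H.Dinf := by rw [← hDH]; exact hdenseD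
  -- closedness
  have hcl0 : ∀ (u : ℕ → 𝓗) (x y : 𝓗), (∀ j, u j ∈ H0.dom) →
      Filter.Tendsto u Filter.atTop (nhds x) →
      Filter.Tendsto (fun j => H0.op (u j)) Filter.atTop (nhds y) →
      x ∈ H0.dom ∧ H0.op x = y := fun u x y hu hx hy => hsa0.closedSeq hu hx hy
  have hclH : ∀ (u : ℕ → 𝓗) (x y : 𝓗), (∀ j, u j ∈ H.dom) →
      Filter.Tendsto u Filter.atTop (nhds x) →
      Filter.Tendsto (fun j => H.op (u j)) Filter.atTop (nhds y) →
      x ∈ H.dom ∧ H.op x = y := fun u x y hu hx hy => hsaH.closedSeq hu hx hy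
  -- the two domination families
  have hE1 := fun n => dominate H H0 (by rw [← hDH, hD0]) hsymH hdense0 hcl0 n
  have hE2 := fun n => dominate H0 H (by rw [← hD0, hDH]) hsym0 hdenseH hclH n
  choose C1 m1 hC1 hB1 using hE1
  choose C2 m2 hC2 hB2 using hE2
  -- division tendsto helper
  have hdivtend : ∀ c : ℝ, Filter.Tendsto (fun L : ℝ => c / L) Filter.atTop (nhds 0) := by
    intro c
    have h2 := tendsto_inv_atTop_zero.const_mul c
    simpa [div_eq_mul_inv] using h2
  -- basic convergence `Q_L v → v` in the H-graph topology
  have hT2 : ∀ v, v ∈ D → ∀ r : ℕ,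
      Filter.Tendsto (fun L : ℝ => ‖H.pw r (S0.Q L v - v)‖) Filter.atTop (nhds 0) := by
    intro v hv r
    refine squeeze_zero
      (g := fun L => C1 r * ∑ k ∈ Finset.range (m1 r), ‖S0.Q L (H0.pw k v) - H0.pw k v‖)
      (fun L => norm_nonneg _) (fun L => ?_) ?_
    · have hmem : S0.Q L v - v ∈ H0.Dinf := H0.Dinf_sub_mem (Q_mem_Dinf S0 L v) (hD0'' hv)
      refine (hB1 r _ hmem).trans (le_of_eq ?_)
      congr 1
      refine Finset.sum_congr rfl fun k _ => ?_
      rw [H0.pw_map_sub, Q_pw_comm S0 hsa0 L k (hD0'' hv)]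
    · have h1 := tendsto_finset_sum (Finset.range (m1 r))
        (fun k (_ : k ∈ Finset.range (m1 r)) =>
          tendsto_iff_norm_sub_tendsto_zero.1 (S0.Q_tendsto (H0.pw k v)))
      have h2 := h1.const_mul (C1 r)
      simpa [FnCalc.Q] using h2
  -- the master convergence lemma
  have master : ∀ ψ, ψ ∈ D → ∀ (t : ℝ) (n mm : ℕ),
      Filter.Tendsto (fun L : ℝ =>
          ‖H.pw mm (S0.Q L (U t (H.pw n (S0.Q L ψ))) - U t (H.pw n ψ))‖)
        Filter.atTop (nhds 0) := by
    intro ψ hψ t n mm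
    have hwD : H.pw n ψ ∈ D := hpwD n hψ
    have hT1 : Filter.Tendsto
        (fun L : ℝ => ‖H.pw mm (S0.Q L (U t (H.pw n (S0.Q L ψ - ψ))))‖)
        Filter.atTop (nhds 0) := by
      refine squeeze_zero
        (g := fun L : ℝ => C1 mm * ∑ k ∈ Finset.range (m1 mm),
          (C2 k * ∑ j ∈ Finset.range (m2 k), ‖H.pw (j + n) (S0.Q L ψ - ψ)‖))
        (fun L => norm_nonneg _) (fun L => ?_) ?_
      · have hQψ : S0.Q L ψ - ψ ∈ D := hsubD (hQD L ψ) hψ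
        have hη : H.pw n (S0.Q L ψ - ψ) ∈ D := hpwD n hQψ
        have hUη : U t (H.pw n (S0.Q L ψ - ψ)) ∈ D := hUD t hη
        calc ‖H.pw mm (S0.Q L (U t (H.pw n (S0.Q L ψ - ψ))))‖
            ≤ C1 mm * ∑ k ∈ Finset.range (m1 mm),
              ‖H0.pw k (S0.Q L (U t (H.pw n (S0.Q L ψ - ψ))))‖ :=
              hB1 mm _ (hD0'' (hQD L _))
          _ ≤ C1 mm * ∑ k ∈ Finset.range (m1 mm),
              (C2 k * ∑ j ∈ Finset.range (m2 k), ‖H.pw (j + n) (S0.Q L ψ - ψ)‖) := by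
              refine mul_le_mul_of_nonneg_left (Finset.sum_le_sum fun k _ => ?_) (hC1 mm)
              calc ‖H0.pw k (S0.Q L (U t (H.pw n (S0.Q L ψ - ψ))))‖
                  = ‖S0.Q L (H0.pw k (U t (H.pw n (S0.Q L ψ - ψ))))‖ := by
                    rw [Q_pw_comm S0 hsa0 L k (hD0'' hUη)]
                _ ≤ ‖H0.pw k (U t (H.pw n (S0.Q L ψ - ψ)))‖ := Q_norm_le S0 L _
                _ ≤ C2 k * ∑ j ∈ Finset.range (m2 k),
                    ‖H.pw j (U t (H.pw n (S0.Q L ψ - ψ)))‖ := hB2 k _ (hDH'' hUη)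
                _ = C2 k * ∑ j ∈ Finset.range (m2 k), ‖H.pw (j + n) (S0.Q L ψ - ψ)‖ := by
                    congr 1
                    refine Finset.sum_congr rfl fun j _ => ?_
                    rw [hUpw j t hη, hUiso, ← H.pw_add_apply]
      · have h1 := tendsto_finset_sum (Finset.range (m1 mm))
          (fun k (_ : k ∈ Finset.range (m1 mm)) =>
            Filter.Tendsto.const_mul (C2 k)
              (tendsto_finset_sum (Finset.range (m2 k))
                (fun j (_ : j ∈ Finset.range (m2 k)) => hT2 ψ hψ (j + n))))
        have h2 := h1.const_mul (C1 mm)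
        simpa using h2
    have hT2' := hT2 (U t (H.pw n ψ)) (hUD t hwD) mm
    refine squeeze_zero
      (g := fun L : ℝ => ‖H.pw mm (S0.Q L (U t (H.pw n (S0.Q L ψ - ψ))))‖
        + ‖H.pw mm (S0.Q L (U t (H.pw n ψ)) - U t (H.pw n ψ))‖)
      (fun L => norm_nonneg _) (fun L => ?_) ?_
    · have hdec : S0.Q L (U t (H.pw n (S0.Q L ψ))) - U t (H.pw n ψ)
          = S0.Q L (U t (H.pw n (S0.Q L ψ - ψ)))
            + (S0.Q L (U t (H.pw n ψ)) - U t (H.pw n ψ)) := by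
        rw [H.pw_map_sub, map_sub (U t), map_sub (S0.Q L)]
        abel
      rw [hdec, H.pw_map_add]
      exact norm_add_le _ _
    · simpa using hT1.add hT2'
  refine ⟨?_, ?_, ?_⟩
  · -- part (i)
    intro ψ hψ t n
    have h := master ψ hψ t 0 n
    simpa only [Op.pw_zero_apply] using h
  · -- part (ii)
    intro f hf k t
    have hfm : Measurable f := hf.1.measurable
    have hfpoly : ∀ j : ℕ, ∃ M, ∀ s : ℝ, 1 ≤ s → |s ^ j * f s| ≤ M := by
      intro j
      obtain ⟨M, hM⟩ := hf.2.2 j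
      refine ⟨M, fun s hs => ?_⟩
      have h0 : (0 : ℝ) ≤ s := by linarith
      rw [abs_of_nonneg (mul_nonneg (pow_nonneg h0 j) (hf.2.1 s h0).le)]
      exact hM s h0
    choose Mphi hMphi using hfpoly
    have hfpoly : ∀ j : ℕ, ∃ M, ∀ s : ℝ, 1 ≤ s → |s ^ j * f s| ≤ M := fun j =>
      ⟨Mphi j, hMphi j⟩
    have hMphi0 : ∀ j, 0 ≤ Mphi j := fun j => (abs_nonneg _).trans (hMphi j 1 le_rfl)
    have hΦD : ∀ x : 𝓗, S0.Φ f x ∈ D := fun x => hD0' (Phi_mem_Dinf S0 hfm hfpoly x)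
    have hΦnorm : ∀ (i : ℕ) (x : 𝓗), ‖H0.pw i (S0.Φ f x)‖ ≤ Mphi i * ‖x‖ := by
      intro i x
      rw [(Phi_pw S0 i f hfm hfpoly x).2]
      exact S0.Φ_norm _ (Mphi i) (fun s hs => hMphi i s hs) x
    -- uniform graph-norm bound for `U t' Φ(f) ζ`
    have hunif : ∀ r : ℕ, ∃ c, 0 ≤ c ∧ ∀ (t' : ℝ) (ζ : 𝓗),
        ‖H0.pw r (U t' (S0.Φ f ζ))‖ ≤ c * ‖ζ‖ := by
      intro r
      refine ⟨C2 r * ∑ j ∈ Finset.range (m2 r), (C1 j * ∑ i ∈ Finset.range (m1 j), Mphi i),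
        mul_nonneg (hC2 r) (Finset.sum_nonneg fun j _ =>
          mul_nonneg (hC1 j) (Finset.sum_nonneg fun i _ => hMphi0 i)), fun t' ζ => ?_⟩
      have hξD : S0.Φ f ζ ∈ D := hΦD ζ
      calc ‖H0.pw r (U t' (S0.Φ f ζ))‖
          ≤ C2 r * ∑ j ∈ Finset.range (m2 r), ‖H.pw j (U t' (S0.Φ f ζ))‖ :=
            hB2 r _ (hDH'' (hUD t' hξD))
        _ ≤ C2 r * ∑ j ∈ Finset.range (m2 r),
            (C1 j * ∑ i ∈ Finset.range (m1 j), Mphi i) * ‖ζ‖ := by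
            refine mul_le_mul_of_nonneg_left (Finset.sum_le_sum fun j _ => ?_) (hC2 r)
            rw [hUpw j t' hξD, hUiso]
            calc ‖H.pw j (S0.Φ f ζ)‖
                ≤ C1 j * ∑ i ∈ Finset.range (m1 j), ‖H0.pw i (S0.Φ f ζ)‖ :=
                  hB1 j _ (hD0'' hξD)
              _ ≤ C1 j * ∑ i ∈ Finset.range (m1 j), Mphi i * ‖ζ‖ :=
                  mul_le_mul_of_nonneg_left
                    (Finset.sum_le_sum fun i _ => hΦnorm i ζ) (hC1 j)
              _ = (C1 j * ∑ i ∈ Finset.range (m1 j), Mphi i) * ‖ζ‖ := by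
                  rw [← Finset.sum_mul, mul_assoc]
        _ = (C2 r * ∑ j ∈ Finset.range (m2 r),
            (C1 j * ∑ i ∈ Finset.range (m1 j), Mphi i)) * ‖ζ‖ := by
            rw [← Finset.sum_mul, mul_assoc]
    -- the key uniform limit
    have hKUL : ∀ t' : ℝ, ∃ c, 0 ≤ c ∧ ∀ L : ℝ, 1 ≤ L → ∀ ζ : 𝓗,
        ‖H0.pw k (S0.Q L (U t' (S0.Q L (S0.Φ f ζ))) - U t' (S0.Φ f ζ))‖ ≤ c / L * ‖ζ‖ := by
      intro t'
      obtain ⟨Md, hMd0, hMd⟩ := Q_decay S0 hsa0 hf (k + 1)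
      obtain ⟨cu, hcu0, hcu⟩ := hunif (k + 1)
      refine ⟨Md + cu, by linarith, fun L hL ζ => ?_⟩
      have hLpos : (0 : ℝ) < L := lt_of_lt_of_le one_pos hL
      have hLne : L ≠ 0 := ne_of_gt hLpos
      have hξD : S0.Φ f ζ ∈ D := hΦD ζ
      have hvD0 : U t' (S0.Φ f ζ) ∈ H0.Dinf := hD0'' (hUD t' hξD)
      have hdec : S0.Q L (U t' (S0.Q L (S0.Φ f ζ))) - U t' (S0.Φ f ζ)
          = S0.Q L (U t' (S0.Q L (S0.Φ f ζ) - S0.Φ f ζ))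
            + (S0.Q L (U t' (S0.Φ f ζ)) - U t' (S0.Φ f ζ)) := by
        rw [map_sub (U t'), map_sub (S0.Q L)]
        abel
      have hp1 : ‖H0.pw k (S0.Q L (U t' (S0.Q L (S0.Φ f ζ) - S0.Φ f ζ)))‖
          ≤ Md / L * ‖ζ‖ := by
        refine (Q_pw_norm S0 L hL k _).trans ?_
        rw [hUiso, norm_sub_rev]
        have halg : L ^ k * (Md / L ^ (k + 1) * ‖ζ‖) = Md / L * ‖ζ‖ := by
          rw [pow_succ]
          field_simp
        exact (mul_le_mul_of_nonneg_left (hMd L hL ζ) (by positivity)).trans_eq halg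
      have hp2 : ‖H0.pw k (S0.Q L (U t' (S0.Φ f ζ)) - U t' (S0.Φ f ζ))‖
          ≤ L⁻¹ * (cu * ‖ζ‖) := by
        have e1 : H0.pw k (S0.Q L (U t' (S0.Φ f ζ)) - U t' (S0.Φ f ζ))
            = -(H0.pw k (U t' (S0.Φ f ζ))
              - S0.Q L (H0.pw k (U t' (S0.Φ f ζ)))) := by
          rw [H0.pw_map_sub, Q_pw_comm S0 hsa0 L k hvD0]
          abel
        rw [e1, norm_neg]
        refine (Q_contraction S0 hsa0 L hL
          (H0.Dinf_mem_dom (H0.Dinf_pw_mem k hvD0))).trans ?_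
        rw [← H0.pw_succ_apply']
        exact mul_le_mul_of_nonneg_left (hcu t' ζ) (by positivity)
      calc ‖H0.pw k (S0.Q L (U t' (S0.Q L (S0.Φ f ζ))) - U t' (S0.Φ f ζ))‖
          = ‖H0.pw k (S0.Q L (U t' (S0.Q L (S0.Φ f ζ) - S0.Φ f ζ)))
            + H0.pw k (S0.Q L (U t' (S0.Φ f ζ)) - U t' (S0.Φ f ζ))‖ := by
            rw [hdec, H0.pw_map_add]
        _ ≤ ‖H0.pw k (S0.Q L (U t' (S0.Q L (S0.Φ f ζ) - S0.Φ f ζ)))‖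
            + ‖H0.pw k (S0.Q L (U t' (S0.Φ f ζ)) - U t' (S0.Φ f ζ))‖ := norm_add_le _ _
        _ ≤ Md / L * ‖ζ‖ + L⁻¹ * (cu * ‖ζ‖) := add_le_add hp1 hp2
        _ = (Md + cu) / L * ‖ζ‖ := by field_simp
    constructor
    · -- first seminorm component
      obtain ⟨c, hc0, hc⟩ := hKUL t
      refine squeeze_zero' (g := fun L : ℝ => c / L)
        (Filter.Eventually.of_forall fun L => Real.iSup_nonneg fun φ => norm_nonneg _)
        ?_ (hdivtend c)
      filter_upwards [Filter.eventually_ge_atTop (1 : ℝ)] with L hL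
      have hLpos : (0 : ℝ) < L := lt_of_lt_of_le one_pos hL
      refine Real.iSup_le (fun φ => ?_) (by positivity)
      refine (hc L hL (φ : 𝓗)).trans ?_
      calc c / L * ‖(φ : 𝓗)‖ ≤ c / L * 1 :=
            mul_le_mul_of_nonneg_left φ.2.2 (by positivity)
        _ = c / L := mul_one _
    · -- second seminorm component
      obtain ⟨c, hc0, hc⟩ := hKUL (-t)
      refine squeeze_zero' (g := fun L : ℝ => c / L)
        (Filter.Eventually.of_forall fun L => Real.iSup_nonneg fun φ => norm_nonneg _)
        ?_ (hdivtend c)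
      filter_upwards [Filter.eventually_ge_atTop (1 : ℝ)] with L hL
      have hLpos : (0 : ℝ) < L := lt_of_lt_of_le one_pos hL
      refine Real.iSup_le (fun φ => ?_) (by positivity)
      set v := S0.Φ f (S0.Q L (U t (S0.Q L (H0.pw k (φ : 𝓗)))) - U t (H0.pw k (φ : 𝓗)))
        with hvdef
      have hwD : S0.Φ f v ∈ D := hΦD v
      have hA'wD : S0.Q L (U (-t) (S0.Q L (S0.Φ f v))) - U (-t) (S0.Φ f v) ∈ D :=
        hsubD (hQD L _) (hUD (-t) hwD)
      have hQsym : ∀ a b : 𝓗, (⟪S0.Q L a, b⟫ : ℂ) = ⟪a, S0.Q L b⟫ := fun a b =>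
        S0.Φ_symm _ a b
      have hUsym : ∀ a b : 𝓗, (⟪U t a, b⟫ : ℂ) = ⟪a, U (-t) b⟫ :=
        U_adjoint hU0 hUadd hUiso t
      have hφD0 : (φ : 𝓗) ∈ H0.Dinf := hD0'' φ.2.1
      have hinner : (⟪v, v⟫ : ℂ) = ⟪(φ : 𝓗), H0.pw k
          (S0.Q L (U (-t) (S0.Q L (S0.Φ f v))) - U (-t) (S0.Φ f v))⟫ := by
        have e1 : (⟪S0.Q L (U t (S0.Q L (H0.pw k (φ : 𝓗)))), S0.Φ f v⟫ : ℂ)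
            = ⟪H0.pw k (φ : 𝓗), S0.Q L (U (-t) (S0.Q L (S0.Φ f v)))⟫ := by
          rw [hQsym, hUsym, hQsym]
        have e2 : (⟪U t (H0.pw k (φ : 𝓗)), S0.Φ f v⟫ : ℂ)
            = ⟪H0.pw k (φ : 𝓗), U (-t) (S0.Φ f v)⟫ := hUsym _ _
        calc (⟪v, v⟫ : ℂ)
            = ⟪S0.Q L (U t (S0.Q L (H0.pw k (φ : 𝓗)))) - U t (H0.pw k (φ : 𝓗)),
              S0.Φ f v⟫ := by
              conv_lhs => rw [hvdef]
              exact S0.Φ_symm f _ v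
          _ = ⟪S0.Q L (U t (S0.Q L (H0.pw k (φ : 𝓗)))), S0.Φ f v⟫
              - ⟪U t (H0.pw k (φ : 𝓗)), S0.Φ f v⟫ := inner_sub_left _ _ _
          _ = ⟪H0.pw k (φ : 𝓗), S0.Q L (U (-t) (S0.Q L (S0.Φ f v)))⟫
              - ⟪H0.pw k (φ : 𝓗), U (-t) (S0.Φ f v)⟫ := by rw [e1, e2]
          _ = ⟪H0.pw k (φ : 𝓗),
              S0.Q L (U (-t) (S0.Q L (S0.Φ f v))) - U (-t) (S0.Φ f v)⟫ :=
              (inner_sub_right _ _ _).symm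
          _ = ⟪(φ : 𝓗), H0.pw k
              (S0.Q L (U (-t) (S0.Q L (S0.Φ f v))) - U (-t) (S0.Φ f v))⟫ :=
              Op.symm_pw hsym0 k hφD0 (hD0'' hA'wD)
      have hnormv : ‖v‖ ^ 2 ≤ 1 * (c / L * ‖v‖) := by
        have h1 : ‖(⟪v, v⟫ : ℂ)‖ = ‖v‖ ^ 2 := by
          rw [inner_self_eq_norm_sq_to_K, norm_pow, RCLike.norm_ofReal, abs_norm]
        calc ‖v‖ ^ 2 = ‖(⟪v, v⟫ : ℂ)‖ := h1.symm
          _ = ‖(⟪(φ : 𝓗), H0.pw k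
              (S0.Q L (U (-t) (S0.Q L (S0.Φ f v))) - U (-t) (S0.Φ f v))⟫ : ℂ)‖ := by
              rw [hinner]
          _ ≤ ‖(φ : 𝓗)‖ * ‖H0.pw k
              (S0.Q L (U (-t) (S0.Q L (S0.Φ f v))) - U (-t) (S0.Φ f v))‖ :=
              norm_inner_le_norm _ _
          _ ≤ 1 * (c / L * ‖v‖) :=
              mul_le_mul φ.2.2 (hc L hL v) (norm_nonneg _) zero_le_one
      by_cases hvz : ‖v‖ = 0
      · rw [hvz]; positivity
      · have hvpos : 0 < ‖v‖ := lt_of_le_of_ne (norm_nonneg _) (Ne.symm hvz)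
        rw [one_mul, sq] at hnormv
        exact le_of_mul_le_mul_right hnormv hvpos
  · -- part (i')
    intro ψ hψ t n mm
    have hiter : ∀ (A : 𝓗 →L[ℂ] 𝓗) (nn : ℕ), ∀ ξ, ξ ∈ H.Dinf →
        iteratedDeriv nn (fun τ : ℝ => A (U τ ξ))
          = fun s : ℝ => A (U s ((Complex.I ^ nn) • H.pw nn ξ)) := by
      intro A nn
      induction nn with
      | zero =>
          intro ξ _
          rw [iteratedDeriv_zero]
          funext s
          rw [pow_zero, one_smul]
          rfl
      | succ nn ih =>
          intro ξ hξ
          have hξd : ξ ∈ H.dom := H.Dinf_mem_dom hξ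
          have hd : deriv (fun τ : ℝ => A (U τ ξ))
              = fun τ : ℝ => A (U τ (Complex.I • H.op ξ)) := by
            funext τ
            have h1 : HasDerivAt (fun τ : ℝ => U τ ξ)
                (Complex.I • H.op (U τ ξ)) τ := hUderiv ξ hξd τ
            have h1' : HasDerivAt (fun τ : ℝ => U τ ξ)
                (Complex.I • (U τ (H.op ξ))) τ := by
              rwa [U_comm_op hU0 hUadd hUderiv hξd τ] at h1
            have hcA : HasDerivAt (fun _ : ℝ => A.restrictScalars ℝ)
                (0 : 𝓗 →L[ℝ] 𝓗) τ := hasDerivAt_const τ _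
            have h2 := hcA.clm_apply h1'
            have h3 : HasDerivAt (fun τ : ℝ => A (U τ ξ))
                (A (Complex.I • (U τ (H.op ξ)))) τ := by simpa using h2
            rw [map_smul (U τ)]
            exact h3.deriv
          rw [iteratedDeriv_succ', hd,
            ih (Complex.I • H.op ξ) (H.Dinf_smul_mem _ (H.Dinf_op_mem hξ))]
          funext s
          congr 2
          rw [H.pw_map_smul, smul_smul, ← pow_succ, ← H.pw_succ_apply]
    have hrw : ∀ L : ℝ,
        H.pw mm (iteratedDeriv n (fun τ : ℝ => S0.Q L (U τ (S0.Q L ψ))) t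
          - iteratedDeriv n (fun τ : ℝ => U τ ψ) t)
        = Complex.I ^ n • H.pw mm
            (S0.Q L (U t (H.pw n (S0.Q L ψ))) - U t (H.pw n ψ)) := by
      intro L
      have e1 := hiter (S0.Q L) n (S0.Q L ψ) (hDH'' (hQD L ψ))
      have e2 := hiter (ContinuousLinearMap.id ℂ 𝓗) n ψ (hDH'' hψ)
      have e1' : iteratedDeriv n (fun τ : ℝ => S0.Q L (U τ (S0.Q L ψ))) t
          = S0.Q L (U t (Complex.I ^ n • H.pw n (S0.Q L ψ))) := congrFun e1 t
      have e2' : iteratedDeriv n (fun τ : ℝ => U τ ψ) t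
          = U t (Complex.I ^ n • H.pw n ψ) := by
        have := congrFun e2 t
        simpa using this
      rw [e1', e2']
      simp only [map_smul]
      rw [← smul_sub, H.pw_map_smul]
    have h := master ψ hψ t n mm
    refine Filter.Tendsto.congr (fun L => ?_) h
    rw [hrw L, norm_smul, norm_pow, Complex.norm_I, one_pow, one_mul]

end Paper
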